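/- Let λ ≠ 0 be a real number, let c : ℕ → ℝ satisfy (n+1)·(n+2)·c(n+2) = λ·( Σ_{k=0}^{n} Σ_{j=0}^{k} c(j)·c(k-j)·c(n-k) - c(n) ) for all n ≥ 0, and suppose the power series Σ_{n≥0} c(n)·xⁿ has radius of convergence R > 0 with sum f(x) for |x| < R. Then the function u(x,t) = f(x) satisfies the Chaffee–Infante equation ∂u/∂t - ∂²u/∂x² + λ(u³ - u) = 0 at every point (x,t) with |x| < R. -/

import Mathlib

open Filter Metric

/-- If a real power series is summable at every point of `(-R, R)`, then the series of
absolute values is summable at every nonnegative radius `r < R`. -/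
lemma abs_summable_of_hasSum {c : ℕ → ℝ} {R : ℝ}
    (hf : ∀ x : ℝ, |x| < R → Summable (fun n : ℕ => c n * x ^ n)) :
    ∀ r : ℝ, 0 ≤ r → r < R → Summable (fun n : ℕ => |c n| * r ^ n) := by
  intro r hr0 hrR
  obtain ⟨r', h1, h2⟩ : ∃ r', r < r' ∧ r' < R := ⟨(r + R) / 2, by linarith, by linarith⟩
  have hr'0 : 0 < r' := lt_of_le_of_lt hr0 h1
  have hs : Summable fun n : ℕ => c n * r' ^ n :=
    hf r' (by rwa [abs_of_nonneg hr'0.le])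
  obtain ⟨C, hC⟩ := (hs.tendsto_atTop_zero.abs).bddAbove_range
  simp only [mem_upperBounds, Set.mem_range, forall_exists_index] at hC
  have hCb : ∀ n : ℕ, |c n * r' ^ n| ≤ C := fun n => hC _ n rfl
  set q : ℝ := r / r' with hq
  have hq0 : 0 ≤ q := div_nonneg hr0 hr'0.le
  have hq1 : q < 1 := (div_lt_one hr'0).2 h1
  refine Summable.of_nonneg_of_le (fun n => by positivity)
    (fun n => ?_) ((summable_geometric_of_lt_one hq0 hq1).mul_left C)
  have hr'ne : r' ≠ 0 := ne_of_gt hr'0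
  have key : |c n| * r ^ n = |c n * r' ^ n| * q ^ n := by
    rw [abs_mul, abs_pow, abs_of_nonneg hr'0.le, hq, div_pow]
    field_simp
  rw [key]
  exact mul_le_mul_of_nonneg_right (hCb n) (by positivity)

/-- Shifting and multiplying by `n+1` preserves absolute summability below radius `R`. -/
lemma abs_summable_shift {c : ℕ → ℝ} {R : ℝ}
    (h : ∀ r : ℝ, 0 ≤ r → r < R → Summable (fun n : ℕ => |c n| * r ^ n)) :
    ∀ r : ℝ, 0 ≤ r → r < R →
      Summable (fun n : ℕ => |((n : ℝ) + 1) * c (n + 1)| * r ^ n) := by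
  intro r hr0 hrR
  obtain ⟨r', h1, h2⟩ : ∃ r', r < r' ∧ r' < R := ⟨(r + R) / 2, by linarith, by linarith⟩
  have hr'0 : 0 < r' := lt_of_le_of_lt hr0 h1
  have hs : Summable fun n : ℕ => |c n| * r' ^ n := h r' hr'0.le h2
  obtain ⟨C, hC⟩ := (hs.tendsto_atTop_zero).bddAbove_range
  simp only [mem_upperBounds, Set.mem_range, forall_exists_index] at hC
  have hCb : ∀ n : ℕ, |c n| * r' ^ n ≤ C := fun n => hC _ n rfl
  set q : ℝ := r / r' with hq
  have hq0 : 0 ≤ q := div_nonneg hr0 hr'0.le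
  have hq1 : q < 1 := (div_lt_one hr'0).2 h1
  have hqn : ‖q‖ < 1 := by rwa [Real.norm_eq_abs, abs_of_nonneg hq0]
  have hsum : Summable fun n : ℕ => ((n : ℝ) + 1) * q ^ n := by
    have h1s := summable_pow_mul_geometric_of_norm_lt_one 1 hqn (R := ℝ)
    have h0s := summable_geometric_of_lt_one hq0 hq1
    simpa [add_mul, pow_one] using h1s.add h0s
  refine Summable.of_nonneg_of_le (fun n => by positivity) (fun n => ?_)
    ((hsum.mul_left (C / r')))
  have hrpow : r ^ n = q ^ n * r' ^ n := by
    rw [hq, div_pow, div_mul_cancel₀]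
    positivity
  have hCn : 0 ≤ C := le_trans (by positivity) (hCb 0)
  have hcc : |c (n+1)| * r' ^ n ≤ C / r' := by
    rw [le_div_iff₀ hr'0, mul_assoc, ← pow_succ]
    exact hCb (n + 1)
  calc |((n : ℝ) + 1) * c (n + 1)| * r ^ n
      = ((n : ℝ) + 1) * (|c (n+1)| * r' ^ n) * q ^ n := by
        rw [abs_mul, hrpow, abs_of_nonneg (by positivity : (0:ℝ) ≤ (n:ℝ)+1)]
        ring
    _ ≤ ((n : ℝ) + 1) * (C / r') * q ^ n := by
        have := mul_le_mul_of_nonneg_left hcc (by positivity : (0:ℝ) ≤ (n:ℝ)+1)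
        exact mul_le_mul_of_nonneg_right this (by positivity)
    _ = C / r' * (((n : ℝ) + 1) * q ^ n) := by ring

/-- Termwise differentiation of a power series inside its interval of convergence. -/
lemma hasDerivAt_powerSeries {c : ℕ → ℝ} {R : ℝ}
    (hA : ∀ r : ℝ, 0 ≤ r → r < R → Summable (fun n : ℕ => |c n| * r ^ n))
    {x : ℝ} (hx : |x| < R) :
    HasDerivAt (fun z : ℝ => ∑' n : ℕ, c n * z ^ n)
      (∑' n : ℕ, ((n : ℝ) + 1) * c (n + 1) * x ^ n) x := by
  have hR : 0 < R := lt_of_le_of_lt (abs_nonneg x) hx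
  obtain ⟨r, hxr, hrR⟩ : ∃ r, |x| < r ∧ r < R := ⟨(|x| + R) / 2, by linarith, by linarith⟩
  have hr0 : 0 < r := lt_of_le_of_lt (abs_nonneg x) hxr
  set u : ℕ → ℝ := fun n => |c n| * ((n : ℝ) * r ^ (n - 1)) with hu
  have husum : Summable u := by
    rw [← summable_nat_add_iff 1]
    have := abs_summable_shift (R := R) hA r hr0.le hrR
    apply this.congr
    intro n
    simp only [hu, abs_mul, Nat.add_sub_cancel]
    push_cast
    rw [abs_of_nonneg (by positivity : (0:ℝ) ≤ (n:ℝ)+1)]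
    ring
  have hg : ∀ (n : ℕ) (y : ℝ), y ∈ ball (0:ℝ) r →
      HasDerivAt (fun z : ℝ => c n * z ^ n) (c n * ((n : ℝ) * y ^ (n - 1))) y :=
    fun n y _ => (hasDerivAt_pow n y).const_mul (c n)
  have hbound : ∀ (n : ℕ) (y : ℝ), y ∈ ball (0:ℝ) r →
      ‖c n * ((n : ℝ) * y ^ (n - 1))‖ ≤ u n := by
    intro n y hy
    rw [mem_ball_zero_iff, Real.norm_eq_abs] at hy
    rw [Real.norm_eq_abs, abs_mul, abs_mul, abs_pow,
      abs_of_nonneg (Nat.cast_nonneg n : (0:ℝ) ≤ (n:ℝ))]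
    have : |y| ^ (n-1) ≤ r ^ (n-1) := pow_le_pow_left₀ (abs_nonneg y) hy.le _
    exact mul_le_mul_of_nonneg_left
      (mul_le_mul_of_nonneg_left this (Nat.cast_nonneg n)) (abs_nonneg _)
  have hg0 : Summable fun n : ℕ => c n * (0:ℝ) ^ n := by
    apply summable_of_ne_finset_zero (s := {0})
    intro n hn
    simp only [Finset.mem_singleton] at hn
    rw [zero_pow hn, mul_zero]
  have hmem : x ∈ ball (0:ℝ) r := by
    rwa [mem_ball_zero_iff, Real.norm_eq_abs]
  have hmem0 : (0:ℝ) ∈ ball (0:ℝ) r := mem_ball_self hr0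
  have main := hasDerivAt_tsum_of_isPreconnected husum isOpen_ball
    (convex_ball (0:ℝ) r).isPreconnected hg hbound hmem0 hg0 hmem
  have hds : Summable fun n : ℕ => c n * ((n : ℝ) * x ^ (n - 1)) := by
    apply Summable.of_norm_bounded husum
    exact fun n => hbound n x hmem
  have heq : (∑' n : ℕ, c n * ((n : ℝ) * x ^ (n - 1)))
      = ∑' n : ℕ, ((n : ℝ) + 1) * c (n + 1) * x ^ n := by
    rw [Summable.tsum_eq_zero_add hds]
    simp only [Nat.cast_zero, zero_mul, mul_zero, zero_add]
    apply tsum_congr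
    intro n
    push_cast
    ring
  rwa [heq] at main

set_option maxHeartbeats 1000000 in
/-- Suppose `λ ≠ 0`, the coefficients `c n` satisfy the recurrence
`(n+1)·(n+2)·c(n+2) = λ·(Σ_{k≤n} Σ_{j≤k} c j · c (k-j) · c (n-k) - c n)`, and the
power series `Σ c n xⁿ` converges to `f x` for `|x| < R` with `R > 0`. Then
`u(x,t) = f(x)` satisfies the Chaffee–Infante equation at every point `(x,t)`
with `|x| < R`. -/
theorem power_series_solution_space (lam : ℝ) (hlam : lam ≠ 0) (c : ℕ → ℝ)
    (hrec : ∀ n : ℕ,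
      ((n : ℝ) + 1) * ((n : ℝ) + 2) * c (n + 2)
        = lam * ((∑ k ∈ Finset.range (n + 1), ∑ j ∈ Finset.range (k + 1),
            c j * c (k - j) * c (n - k)) - c n))
    (R : ℝ) (hR : 0 < R) (f : ℝ → ℝ)
    (hf : ∀ x : ℝ, |x| < R → HasSum (fun n : ℕ => c n * x ^ n) (f x))
    (u : ℝ → ℝ → ℝ) (hu : ∀ x t : ℝ, u x t = f x) :
    ∀ x t : ℝ, |x| < R →
      deriv (fun s => u x s) t - iteratedDeriv 2 (fun y => u y t) x
        + lam * ((u x t)^3 - u x t) = 0 := by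
  -- absolute summability of `c` and its derived coefficient sequences
  have hA : ∀ r : ℝ, 0 ≤ r → r < R → Summable (fun n : ℕ => |c n| * r ^ n) :=
    abs_summable_of_hasSum (fun x hx => (hf x hx).summable)
  set c1 : ℕ → ℝ := fun n => ((n : ℝ) + 1) * c (n + 1) with hc1
  have hA1 : ∀ r : ℝ, 0 ≤ r → r < R → Summable (fun n : ℕ => |c1 n| * r ^ n) :=
    abs_summable_shift hA
  -- the sum functions
  set F : ℝ → ℝ := fun z => ∑' n : ℕ, c n * z ^ n with hF
  set F1 : ℝ → ℝ := fun z => ∑' n : ℕ, c1 n * z ^ n with hF1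
  set F2 : ℝ → ℝ := fun z => ∑' n : ℕ, ((n : ℝ) + 1) * c1 (n + 1) * z ^ n with hF2
  have hfF : ∀ z : ℝ, |z| < R → f z = F z := fun z hz => (hf z hz).tsum_eq.symm
  have hDF : ∀ z : ℝ, |z| < R → HasDerivAt F (F1 z) z := fun z hz =>
    hasDerivAt_powerSeries hA hz
  have hDF1 : ∀ z : ℝ, |z| < R → HasDerivAt F1 (F2 z) z := fun z hz =>
    hasDerivAt_powerSeries hA1 hz
  -- the set where everything is valid
  have hS : IsOpen {z : ℝ | |z| < R} := by
    have : {z : ℝ | |z| < R} = abs ⁻¹' Set.Iio R := rfl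
    rw [this]
    exact isOpen_Iio.preimage continuous_abs
  -- f agrees with F near every point of the set
  have hfFnhds : ∀ z : ℝ, |z| < R → f =ᶠ[nhds z] F := by
    intro z hz
    filter_upwards [hS.mem_nhds hz] with w hw using hfF w hw
  -- first derivative of f on the set
  have hderivf : ∀ z : ℝ, |z| < R → deriv f z = F1 z := by
    intro z hz
    exact (((hDF z hz)).congr_of_eventuallyEq (hfFnhds z hz)).deriv
  -- second derivative
  intro x t hx
  have hderiv2 : deriv (deriv f) x = F2 x := by
    have hev : deriv f =ᶠ[nhds x] F1 := by
      filter_upwards [hS.mem_nhds hx] with w hw using hderivf w hw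
    rw [Filter.EventuallyEq.deriv_eq hev]
    exact (hDF1 x hx).deriv
  -- the cube as a power series (Cauchy product twice)
  have hnorm : Summable fun n : ℕ => ‖c n * x ^ n‖ := by
    have := hA |x| (abs_nonneg x) hx
    apply this.congr
    intro n
    rw [Real.norm_eq_abs, abs_mul, abs_pow]
  have h1 := hasSum_sum_range_mul_of_summable_norm (f := fun n : ℕ => c n * x ^ n)
    (g := fun n : ℕ => c n * x ^ n) hnorm hnorm
  have hnorm1 := summable_norm_sum_mul_range_of_summable_norm
    (f := fun n : ℕ => c n * x ^ n) (g := fun n : ℕ => c n * x ^ n) hnorm hnorm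
  have h2 := hasSum_sum_range_mul_of_summable_norm
    (f := fun n : ℕ => ∑ k ∈ Finset.range (n + 1), (c k * x ^ k) * (c (n - k) * x ^ (n - k)))
    (g := fun n : ℕ => c n * x ^ n) hnorm1 hnorm
  rw [h1.tsum_eq, (hf x hx).tsum_eq] at h2
  -- rewrite the Cauchy product coefficients
  have hcube : HasSum (fun n : ℕ =>
      (∑ k ∈ Finset.range (n + 1), ∑ j ∈ Finset.range (k + 1),
        c j * c (k - j) * c (n - k)) * x ^ n) (f x ^ 3) := by
    have hco : ∀ n : ℕ,
        (∑ k ∈ Finset.range (n + 1),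
          (∑ i ∈ Finset.range (k + 1), (c i * x ^ i) * (c (k - i) * x ^ (k - i)))
            * (c (n - k) * x ^ (n - k)))
        = (∑ k ∈ Finset.range (n + 1), ∑ j ∈ Finset.range (k + 1),
            c j * c (k - j) * c (n - k)) * x ^ n := by
      intro n
      rw [Finset.sum_mul]
      apply Finset.sum_congr rfl
      intro k hk
      rw [Finset.mem_range, Nat.lt_succ_iff] at hk
      rw [Finset.sum_mul, Finset.sum_mul]
      apply Finset.sum_congr rfl
      intro j hj
      rw [Finset.mem_range, Nat.lt_succ_iff] at hj
      have hxp : x ^ j * x ^ (k - j) * x ^ (n - k) = x ^ n := by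
        rw [← pow_add, ← pow_add, Nat.add_sub_cancel' hj, Nat.add_sub_cancel' hk]
      calc c j * x ^ j * (c (k - j) * x ^ (k - j)) * (c (n - k) * x ^ (n - k))
          = c j * c (k - j) * c (n - k) * (x ^ j * x ^ (k - j) * x ^ (n - k)) := by ring
        _ = c j * c (k - j) * c (n - k) * x ^ n := by rw [hxp]
    have h3 : f x * f x * f x = f x ^ 3 := by ring
    rw [h3] at h2
    rwa [show (fun n : ℕ =>
        (∑ k ∈ Finset.range (n + 1),
          (∑ i ∈ Finset.range (k + 1), (c i * x ^ i) * (c (k - i) * x ^ (k - i)))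
            * (c (n - k) * x ^ (n - k))))
      = (fun n : ℕ => (∑ k ∈ Finset.range (n + 1), ∑ j ∈ Finset.range (k + 1),
            c j * c (k - j) * c (n - k)) * x ^ n) from funext hco] at h2
  -- second derivative coefficient sum
  have hF2val : F2 x = lam * (f x ^ 3 - f x) := by
    have hsum2 : HasSum (fun n : ℕ =>
        lam * ((∑ k ∈ Finset.range (n + 1), ∑ j ∈ Finset.range (k + 1),
          c j * c (k - j) * c (n - k)) * x ^ n - c n * x ^ n))
        (lam * (f x ^ 3 - f x)) := (hcube.sub (hf x hx)).mul_left lam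
    have hco2 : ∀ n : ℕ,
        lam * ((∑ k ∈ Finset.range (n + 1), ∑ j ∈ Finset.range (k + 1),
          c j * c (k - j) * c (n - k)) * x ^ n - c n * x ^ n)
        = ((n : ℝ) + 1) * c1 (n + 1) * x ^ n := by
      intro n
      have h := hrec n
      have hc1n : ((n : ℝ) + 1) * c1 (n + 1) = ((n : ℝ) + 1) * ((n : ℝ) + 2) * c (n + 2) := by
        simp only [hc1]
        push_cast
        ring
      rw [hc1n, h]
      ring
    rw [show (fun n : ℕ => lam * ((∑ k ∈ Finset.range (n + 1), ∑ j ∈ Finset.range (k + 1),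
          c j * c (k - j) * c (n - k)) * x ^ n - c n * x ^ n))
      = (fun n : ℕ => ((n : ℝ) + 1) * c1 (n + 1) * x ^ n) from funext hco2] at hsum2
    exact hsum2.tsum_eq
  -- put everything together
  have hut : ∀ s : ℝ, u x s = f x := fun s => hu x s
  have hconst : deriv (fun s => u x s) t = 0 := by
    have : (fun s => u x s) = fun _ => f x := funext hut
    rw [this, deriv_const]
  have hut2 : (fun y => u y t) = f := funext (fun y => hu y t)
  rw [hconst, hut2, hu x t, iteratedDeriv_succ, iteratedDeriv_one]
  rw [hderiv2, hF2val]
  ring
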